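/- Let μ be a probability measure on (0,∞), let λ > 0, and let ρ₁ < ρ₂ be real numbers such that 0 < ∫₀^∞ a^{ρ} e^{-λ a} μ(da) < ∞ for ρ ∈ {ρ₁, ρ₂}. Let A be a random variable with law μ_{ρ₁,λ} (the (ρ₁,λ)-tilted law of μ) and let G be an independent random variable with the Gamma(ρ₂-ρ₁) distribution. Then the random variable Y = G / A has Lebesgue density y ↦ y^{ρ₂-ρ₁-1} (∫₀^∞ a^{ρ₂} e^{-(λ+y) a} μ(da)) / (Γ(ρ₂-ρ₁) ∫₀^∞ a^{ρ₁} e^{-λ a} μ(da)) on (0,∞). -/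

import Mathlib

open MeasureTheory Set

/-- The `(ρ, x)`-tilted law of a probability measure `μ` on `(0,∞)`:
`μ_{ρ,x}(da) = a^ρ e^{-x a} μ(da) / ∫ a^ρ e^{-x a} μ(da)`. -/
noncomputable def tilt (μ : Measure ℝ) (ρ x : ℝ) : Measure ℝ :=
  μ.withDensity fun a =>
    ENNReal.ofReal (a ^ ρ * Real.exp (-x * a) / ∫ b, b ^ ρ * Real.exp (-x * b) ∂μ)

/-- The Gamma(a) distribution (rate 1), with density `t^{a-1} e^{-t}/Γ(a)` on `(0,∞)`. -/
noncomputable def gammaM (a : ℝ) : Measure ℝ :=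
  volume.withDensity ((Set.Ioi (0 : ℝ)).indicator fun t =>
    ENNReal.ofReal (t ^ (a - 1) * Real.exp (-t) / Real.Gamma a))

/-- Change of variables `g = a y` for a lower integral over `volume` on `ℝ`. -/
lemma lint_scale {a : ℝ} (ha : 0 < a) {H : ℝ → ENNReal} (hH : Measurable H) :
    ∫⁻ g, H g = ENNReal.ofReal a * ∫⁻ y, H (a * y) := by
  have h1 : ∫⁻ y, H (a * y) = ENNReal.ofReal |a⁻¹| * ∫⁻ g, H g := by
    rw [← lintegral_map hH (measurable_const_mul a), Real.map_volume_mul_left ha.ne',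
      lintegral_smul_measure, smul_eq_mul]
  rw [h1, ← mul_assoc, abs_of_pos (inv_pos.mpr ha), ← ENNReal.ofReal_mul ha.le,
    mul_inv_cancel₀ ha.ne', ENNReal.ofReal_one, one_mul]

/-- **Density computation in the proof of Proposition 1.** If `A ~ μ_{ρ₁,λ}` and
`G ~ Gamma(ρ₂-ρ₁)` are independent, then `Y = G / A` has the indicated Lebesgue density
on `(0,∞)`. -/
theorem stmt1 (μ : Measure ℝ) [IsProbabilityMeasure μ] (hμ : μ (Set.Iic 0) = 0)
    (lam ρ₁ ρ₂ : ℝ) (hlam : 0 < lam) (hρ : ρ₁ < ρ₂)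
    (h₁pos : 0 < ∫ a, a ^ ρ₁ * Real.exp (-lam * a) ∂μ)
    (h₁int : Integrable (fun a => a ^ ρ₁ * Real.exp (-lam * a)) μ)
    (h₂pos : 0 < ∫ a, a ^ ρ₂ * Real.exp (-lam * a) ∂μ)
    (h₂int : Integrable (fun a => a ^ ρ₂ * Real.exp (-lam * a)) μ) :
    Measure.map (fun p : ℝ × ℝ => p.2 / p.1) ((tilt μ ρ₁ lam).prod (gammaM (ρ₂ - ρ₁)))
      = volume.withDensity ((Set.Ioi (0 : ℝ)).indicator fun y =>
          ENNReal.ofReal (y ^ (ρ₂ - ρ₁ - 1) * (∫ a, a ^ ρ₂ * Real.exp (-(lam + y) * a) ∂μ) /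
            (Real.Gamma (ρ₂ - ρ₁) * ∫ a, a ^ ρ₁ * Real.exp (-lam * a) ∂μ))) := by
  set b : ℝ := ρ₂ - ρ₁ with hb
  have hbpos : 0 < b := sub_pos.mpr hρ
  set Z₁ : ℝ := ∫ a, a ^ ρ₁ * Real.exp (-lam * a) ∂μ with hZ₁
  have hΓ : 0 < Real.Gamma b := Real.Gamma_pos_of_pos hbpos
  have hae : ∀ᵐ a ∂μ, 0 < a := by
    rw [ae_iff]
    convert hμ using 2
    ext a; simp [not_lt]
  haveI : SFinite (gammaM b) := by unfold gammaM; infer_instance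
  -- notation
  set w₁ : ℝ → ENNReal := fun a => ENNReal.ofReal (a ^ ρ₁ * Real.exp (-lam * a) / Z₁) with hw₁def
  have hw₁ : Measurable w₁ :=
    (((measurable_id.pow_const ρ₁).mul
      ((measurable_id.const_mul (-lam)).exp)).div_const Z₁).ennreal_ofReal
  have htilt : tilt μ ρ₁ lam = μ.withDensity w₁ := rfl
  set gd : ℝ → ℝ := fun t => t ^ (b - 1) * Real.exp (-t) / Real.Gamma b with hgddef
  have hgd : Measurable gd :=
    (((measurable_id.pow_const (b-1)).mul (measurable_id.neg.exp)).div_const _)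
  set gD : ℝ → ENNReal := (Set.Ioi (0 : ℝ)).indicator fun t => ENNReal.ofReal (gd t) with hgDdef
  have hgD : Measurable gD := (hgd.ennreal_ofReal).indicator measurableSet_Ioi
  have hgamma : gammaM b = volume.withDensity gD := rfl
  have hdiv : Measurable fun p : ℝ × ℝ => p.2 / p.1 := measurable_snd.div measurable_fst
  refine Measure.ext fun s hs => ?_
  have hT : MeasurableSet ((fun p : ℝ × ℝ => p.2 / p.1) ⁻¹' s) := hdiv hs
  -- the kernel function after substitution
  set c : ℝ → ENNReal :=
    (Set.Ioi (0:ℝ) ∩ s).indicator fun y => ENNReal.ofReal (y ^ (b - 1) / (Real.Gamma b * Z₁))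
    with hcdef
  have hc : Measurable c :=
    (((measurable_id.pow_const (b-1)).div_const _).ennreal_ofReal).indicator
      (measurableSet_Ioi.inter hs)
  set K : ℝ → ℝ → ENNReal := fun a y =>
    c y * ENNReal.ofReal (a ^ ρ₂ * Real.exp (-(lam + y) * a)) with hKdef
  have hKm : Measurable (Function.uncurry K) := by
    apply (hc.comp measurable_snd).mul
    apply Measurable.ennreal_ofReal
    exact (measurable_fst.pow_const ρ₂).mul
      (((measurable_const.add measurable_snd).neg.mul measurable_fst).exp)
  have hKa : Measurable fun a : ℝ => a ^ ρ₂ := measurable_id.pow_const ρ₂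
  -- Step 1: reduce LHS to iterated integral of K
  rw [Measure.map_apply hdiv hs, Measure.prod_apply hT, htilt,
    lintegral_withDensity_eq_lintegral_mul μ hw₁ (measurable_measure_prodMk_left hT)]
  have hstep : ∀ᵐ a ∂μ,
      (w₁ * fun a => gammaM b (Prod.mk a ⁻¹' ((fun p : ℝ × ℝ => p.2 / p.1) ⁻¹' s))) a
        = ∫⁻ y, K a y := by
    filter_upwards [hae] with a ha
    have hU : Prod.mk a ⁻¹' ((fun p : ℝ × ℝ => p.2 / p.1) ⁻¹' s) = (fun g => g / a) ⁻¹' s := rfl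
    have hUm : MeasurableSet ((fun g : ℝ => g / a) ⁻¹' s) := (measurable_id.div_const a) hs
    have h2 : gammaM b (Prod.mk a ⁻¹' ((fun p : ℝ × ℝ => p.2 / p.1) ⁻¹' s))
        = ∫⁻ g, ((fun g : ℝ => g / a) ⁻¹' s).indicator gD g := by
      rw [hU, hgamma, withDensity_apply _ hUm, lintegral_indicator hUm]
    have h3 : ∀ y : ℝ, ((fun g : ℝ => g / a) ⁻¹' s).indicator gD (a * y)
        = (Set.Ioi (0:ℝ) ∩ s).indicator (fun y => ENNReal.ofReal (gd (a * y))) y := by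
      intro y
      have hmem1 : a * y ∈ (fun g : ℝ => g / a) ⁻¹' s ↔ y ∈ s := by
        simp [mul_div_cancel_left₀ _ ha.ne']
      have hmem2 : a * y ∈ Set.Ioi (0:ℝ) ↔ y ∈ Set.Ioi (0:ℝ) := by
        simp only [Set.mem_Ioi]
        constructor
        · intro h; by_contra hy; push_neg at hy; nlinarith
        · intro h; exact mul_pos ha h
      rcases Classical.em (y ∈ s) with h1 | h1
      · rcases Classical.em (y ∈ Set.Ioi (0:ℝ)) with h2 | h2
        · rw [Set.indicator_of_mem (hmem1.mpr h1), hgDdef,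
            Set.indicator_of_mem (hmem2.mpr h2), Set.indicator_of_mem (Set.mem_inter h2 h1)]
        · rw [Set.indicator_of_mem (hmem1.mpr h1), hgDdef,
            Set.indicator_of_notMem (fun h => h2 (hmem2.mp h)),
            Set.indicator_of_notMem (fun h : y ∈ Set.Ioi (0:ℝ) ∩ s => h2 h.1)]
      · rw [Set.indicator_of_notMem (fun h => h1 (hmem1.mp h)),
          Set.indicator_of_notMem (fun h : y ∈ Set.Ioi (0:ℝ) ∩ s => h1 h.2)]
    have h4 : Measurable fun y => (Set.Ioi (0:ℝ) ∩ s).indicator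
        (fun y => ENNReal.ofReal (gd (a * y))) y :=
      ((hgd.comp (measurable_const_mul a)).ennreal_ofReal).indicator
        (measurableSet_Ioi.inter hs)
    calc (w₁ * fun a => gammaM b (Prod.mk a ⁻¹' ((fun p : ℝ × ℝ => p.2 / p.1) ⁻¹' s))) a
        = w₁ a * (ENNReal.ofReal a *
            ∫⁻ y, (Set.Ioi (0:ℝ) ∩ s).indicator (fun y => ENNReal.ofReal (gd (a * y))) y) := by
          rw [Pi.mul_apply, h2, lint_scale ha (hgD.indicator hUm)]
          congr 1
          congr 1
          exact lintegral_congr fun y => h3 y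
      _ = ∫⁻ y, (w₁ a * ENNReal.ofReal a) *
            (Set.Ioi (0:ℝ) ∩ s).indicator (fun y => ENNReal.ofReal (gd (a * y))) y := by
          rw [lintegral_const_mul _ h4, mul_assoc]
      _ = ∫⁻ y, K a y := by
          refine lintegral_congr fun y => ?_
          rcases Classical.em (y ∈ Set.Ioi (0:ℝ) ∩ s) with hy | hy
          · have hy0 : 0 < y := hy.1
            simp only [hKdef, hcdef]
            rw [Set.indicator_of_mem hy, Set.indicator_of_mem hy]
            have harg1 : 0 ≤ a ^ ρ₁ * Real.exp (-lam * a) / Z₁ := by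
              apply div_nonneg _ h₁pos.le
              exact mul_nonneg (Real.rpow_nonneg ha.le _) (Real.exp_nonneg _)
            rw [hw₁def]
            rw [← ENNReal.ofReal_mul harg1, ← ENNReal.ofReal_mul (mul_nonneg harg1 ha.le),
              ← ENNReal.ofReal_mul (div_nonneg (Real.rpow_nonneg hy0.le _)
                (mul_nonneg hΓ.le h₁pos.le))]
            congr 1
            have e1 : a ^ ρ₂ = a ^ ρ₁ * a ^ (b - 1) * a := by
              have e : a ^ ρ₁ * a ^ (b - 1) * a ^ (1:ℝ) = a ^ (ρ₁ + (b - 1) + 1) := by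
                rw [← Real.rpow_add ha, ← Real.rpow_add ha]
              rw [Real.rpow_one] at e
              rw [e]
              congr 1
              rw [hb]; ring
            have e2 : Real.exp (-(lam + y) * a) = Real.exp (-lam * a) * Real.exp (-(a * y)) := by
              rw [← Real.exp_add]; ring_nf
            rw [e1, e2]
            simp only [hgddef]
            rw [Real.mul_rpow ha.le hy0.le]
            ring
          · simp only [hKdef, hcdef]
            rw [Set.indicator_of_notMem hy, Set.indicator_of_notMem hy, zero_mul, mul_zero]
  rw [lintegral_congr_ae hstep, lintegral_lintegral_swap hKm.aemeasurable]
  -- Step 2: compute the inner integral over a and match with the density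
  rw [withDensity_apply _ hs, ← lintegral_indicator hs, Set.indicator_indicator,
    Set.inter_comm]
  refine lintegral_congr fun y => ?_
  rcases Classical.em (y ∈ Set.Ioi (0:ℝ) ∩ s) with hy | hy
  · have hy0 : 0 < y := hy.1
    have hint : Integrable (fun a => a ^ ρ₂ * Real.exp (-(lam + y) * a)) μ := by
      refine h₂int.mono ?_ ?_
      · exact ((hKa.mul
          (((measurable_const.neg).mul measurable_id).exp)).aestronglyMeasurable)
      · filter_upwards [hae] with a ha
        rw [Real.norm_eq_abs, Real.norm_eq_abs,
          abs_of_nonneg (mul_nonneg (Real.rpow_nonneg ha.le _) (Real.exp_nonneg _)),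
          abs_of_nonneg (mul_nonneg (Real.rpow_nonneg ha.le _) (Real.exp_nonneg _))]
        apply mul_le_mul_of_nonneg_left _ (Real.rpow_nonneg ha.le _)
        apply Real.exp_le_exp.mpr
        nlinarith
    have hnn : 0 ≤ᵐ[μ] fun a => a ^ ρ₂ * Real.exp (-(lam + y) * a) := by
      filter_upwards [hae] with a ha
      exact mul_nonneg (Real.rpow_nonneg ha.le _) (Real.exp_nonneg _)
    have hlint : ∫⁻ a, ENNReal.ofReal (a ^ ρ₂ * Real.exp (-(lam + y) * a)) ∂μ
        = ENNReal.ofReal (∫ a, a ^ ρ₂ * Real.exp (-(lam + y) * a) ∂μ) :=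
      (MeasureTheory.ofReal_integral_eq_lintegral_ofReal hint hnn).symm
    calc ∫⁻ a, K a y ∂μ
        = c y * ∫⁻ a, ENNReal.ofReal (a ^ ρ₂ * Real.exp (-(lam + y) * a)) ∂μ := by
          simp only [hKdef]
          exact lintegral_const_mul _ (hKa.mul
            (((measurable_const.neg).mul measurable_id).exp)).ennreal_ofReal
      _ = (Set.Ioi (0:ℝ) ∩ s).indicator (fun y =>
            ENNReal.ofReal (y ^ (b - 1) * (∫ a, a ^ ρ₂ * Real.exp (-(lam + y) * a) ∂μ) /
              (Real.Gamma b * Z₁))) y := by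
          simp only [hcdef]
          rw [hlint, Set.indicator_of_mem hy, Set.indicator_of_mem hy,
            ← ENNReal.ofReal_mul (div_nonneg (Real.rpow_nonneg hy0.le _)
              (mul_nonneg hΓ.le h₁pos.le))]
          congr 1
          ring
  · rw [Set.indicator_of_notMem hy]
    have : ∀ a : ℝ, K a y = 0 := by
      intro a
      simp only [hKdef, hcdef]
      rw [Set.indicator_of_notMem hy, zero_mul]
    simp [this]
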